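/- Let 1 ≤ p < q < r < ∞, let (X,μ) be a standard Borel measure space with μ finite, let G be a topological group, and let π^p : G → O(L_p(X,μ)) be a (BL) measure-preserving ergodic orthogonal representation with Mazur-conjugate representations π^q on L_q(X,μ) and π^r on L_r(X,μ). If H^1(G,π^p) = 0 and H^1(G,π^r) = 0, then H^1(G,π^q) = 0. -/

import Mathlib

open MeasureTheory ENNReal Filter Set

noncomputable section

/-- A strongly continuous representation of a topological group `G` by bijective
`ℂ`-linear isometries of a complex normed module `E` (the group `O(E)` of the paper). -/
structure IsomRep (G : Type*) [Group G] [TopologicalSpace G]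
    (E : Type*) [AddCommGroup E] [SMul ℂ E] [Norm E] where
  ρ : G → E → E
  map_add : ∀ (g : G) (x y : E), ρ g (x + y) = ρ g x + ρ g y
  map_smul : ∀ (g : G) (c : ℂ) (x : E), ρ g (c • x) = c • ρ g x
  norm_map : ∀ (g : G) (x : E), ‖ρ g x‖ = ‖x‖
  bijective : ∀ g : G, Function.Bijective (ρ g)
  map_mul' : ∀ (g h : G) (x : E), ρ (g * h) x = ρ g (ρ h x)
  map_one' : ∀ x : E, ρ 1 x = x
  strong_cont : ∀ (x : E) (g₀ : G) (ε : ℝ), 0 < ε →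
    ∀ᶠ g in nhds g₀, ‖ρ g x - ρ g₀ x‖ < ε

variable {G : Type*} [Group G] [TopologicalSpace G]
variable {E : Type*} [AddCommGroup E] [SMul ℂ E] [Norm E]

/-- Continuity of a map into a normed module, expressed via the norm. -/
def NormContinuous (b : G → E) : Prop :=
  ∀ (g₀ : G) (ε : ℝ), 0 < ε → ∀ᶠ g in nhds g₀, ‖b g - b g₀‖ < ε

/-- A continuous `1`-cocycle for the representation `π`. -/
def IsCocycle (π : IsomRep G E) (b : G → E) : Prop :=
  NormContinuous b ∧ ∀ g h : G, b (g * h) = b g + π.ρ g (b h)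

/-- A `1`-coboundary. -/
def IsCoboundary (π : IsomRep G E) (b : G → E) : Prop :=
  ∃ f : E, ∀ g : G, b g = f - π.ρ g f

/-- `H¹(G,π) = 0` : every continuous cocycle is a coboundary, equivalently every affine
isometric action with linear part `π` has a fixed point. -/
def H1Trivial (π : IsomRep G E) : Prop :=
  ∀ b : G → E, IsCocycle π b → IsCoboundary π b

/-- The set of `π(G)`-invariant vectors. -/
def InvariantVectors (π : IsomRep G E) : Set E := {x | ∀ g : G, π.ρ g x = x}

/-- The quotient (semi)norm of `x` modulo a subset `S` : the distance from `x` to `S`. -/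
def quotNorm (S : Set E) (x : E) : ℝ := ⨅ w : S, ‖x - (w : E)‖

/-- `π` admits a sequence of almost invariant unit vectors lying in the subset `S`. -/
def HasAIVin (π : IsomRep G E) (S : Set E) : Prop :=
  ∃ v : ℕ → E, (∀ n, v n ∈ S ∧ ‖v n‖ = 1) ∧
    ∀ Q : Set G, IsCompact Q → ∀ ε : ℝ, 0 < ε →
      ∃ N : ℕ, ∀ n ≥ N, ∀ g ∈ Q, ‖π.ρ g (v n) - v n‖ < ε

/-- The quotient representation of `π` on `E / E^{π(G)}` admits a sequence of almost
invariant unit vectors (expressed upstairs via the quotient norm). -/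
def HasAIVquot (π : IsomRep G E) : Prop :=
  ∃ v : ℕ → E, (∀ n, quotNorm (InvariantVectors π) (v n) = 1) ∧
    ∀ Q : Set G, IsCompact Q → ∀ ε : ℝ, 0 < ε →
      ∃ N : ℕ, ∀ n ≥ N, ∀ g ∈ Q, quotNorm (InvariantVectors π) (π.ρ g (v n) - v n) < ε

/-- Kazhdan's property (T) : every unitary representation of `G` (on a complex Hilbert space)
with almost invariant vectors has a nonzero invariant vector. -/
def HasKazhdanT (G : Type*) [Group G] [TopologicalSpace G] : Prop :=
  ∀ (H : Type) [NormedAddCommGroup H] [InnerProductSpace ℂ H] [CompleteSpace H],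
    ∀ π : IsomRep G H,
      (∀ Q : Set G, IsCompact Q → ∀ ε : ℝ, 0 < ε →
        ∃ v : H, ‖v‖ = 1 ∧ ∀ g ∈ Q, ‖π.ρ g v - v‖ < ε) →
      ∃ v : H, v ≠ 0 ∧ ∀ g : G, π.ρ g v = v

/-! ### Sequence spaces `ℓ_p` -/

/-- `ℓ_p(X)`, the space of `p`-summable complex families over `X`. -/
abbrev lpSeq (X : Type*) (p : ℝ) := lp (fun _ : X => ℂ) (ENNReal.ofReal p)

/-- Property `(F_{ℓ_p})` : every affine isometric action of `G` on `ℓ_p` has a fixed point. -/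
def HasFlp (G : Type*) [Group G] [TopologicalSpace G] (p : ℝ) : Prop :=
  ∀ π : IsomRep G (lpSeq ℕ p), H1Trivial π

/-- The fixed-point spectrum `𝓕_{ℓ^∞}(G)` of `G` for actions on the spaces `ℓ_p`. -/
def lpSpectrum (G : Type*) [Group G] [TopologicalSpace G] : Set ℝ :=
  {p : ℝ | 1 ≤ p ∧ HasFlp G p}

/-! ### `L_p(X,μ)` spaces and (BL) representations -/

variable {X : Type*} [MeasurableSpace X]

/-- `L_p(X,μ)` with a real exponent `p`. -/
abbrev LpSp (μ : Measure X) (p : ℝ) := Lp ℂ (ENNReal.ofReal p) μ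

/-- `U` is an isometry of Banach–Lamperti form with data `(h, φ)` :
`U f (x) = h x · (d(φ_*μ)/dμ (x))^{1/p} · f (φ x)`, with `|h| = 1` a.e. and `φ` a
measure-class-preserving bijection of `X`. -/
def IsBLIsometry (μ : Measure X) (p : ℝ) (U : LpSp μ p → LpSp μ p)
    (h : X → ℂ) (φ : X → X) : Prop :=
  Function.Bijective φ ∧ Measurable φ ∧
  μ.map φ ≪ μ ∧ μ ≪ μ.map φ ∧
  (∀ᵐ x ∂μ, ‖h x‖ = 1) ∧
  ∀ f : LpSp μ p, (U f : X → ℂ) =ᵐ[μ]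
    fun x => h x * ((((μ.map φ).rnDeriv μ x).toReal ^ (1 / p) : ℝ) : ℂ) * (f : X → ℂ) (φ x)

/-- `U` is a measure-preserving isometry of Banach–Lamperti form with data `(h, φ)` :
`U f (x) = h x · f (φ x)` with `|h| = 1` a.e. and `φ` a measure-preserving bijection. -/
def IsBLmpIsometry (μ : Measure X) (p : ℝ) (U : LpSp μ p → LpSp μ p)
    (h : X → ℂ) (φ : X → X) : Prop :=
  Function.Bijective φ ∧ MeasurePreserving φ μ μ ∧
  (∀ᵐ x ∂μ, ‖h x‖ = 1) ∧
  ∀ f : LpSp μ p, (U f : X → ℂ) =ᵐ[μ] fun x => h x * (f : X → ℂ) (φ x)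

/-- A (BL) orthogonal representation of `G` together with all its Mazur conjugates :
for every `q ∈ [1,∞)` a strongly continuous isometric representation on `L_q(X,μ)`,
all given by the Banach–Lamperti formula with the *same* data `(h_g, φ_g)` (this is
exactly the family `(π^q)_q` of conjugates of a (BL) representation by the Mazur maps). -/
structure BLFamily (G : Type*) [Group G] [TopologicalSpace G]
    {X : Type*} [MeasurableSpace X] (μ : Measure X) where
  h : G → X → ℂ
  φ : G → X → X
  rep : (q : ℝ) → 1 ≤ q → IsomRep G (LpSp μ q)
  isBL : ∀ (q : ℝ) (hq : 1 ≤ q) (g : G), IsBLIsometry μ q ((rep q hq).ρ g) (h g) (φ g)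

/-- A measure-preserving (BL) orthogonal representation together with all its Mazur
conjugates, as in `BLFamily`. -/
structure BLmpFamily (G : Type*) [Group G] [TopologicalSpace G]
    {X : Type*} [MeasurableSpace X] (μ : Measure X) where
  h : G → X → ℂ
  φ : G → X → X
  rep : (q : ℝ) → 1 ≤ q → IsomRep G (LpSp μ q)
  isBL : ∀ (q : ℝ) (hq : 1 ≤ q) (g : G), IsBLmpIsometry μ q ((rep q hq).ρ g) (h g) (φ g)

/-- The fixed-point spectrum `𝓕_{L^∞(X,μ)}(G,π)` of a (BL) representation and its
Mazur conjugates. -/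
def BLFamily.spectrum {G : Type*} [Group G] [TopologicalSpace G]
    {X : Type*} [MeasurableSpace X] {μ : Measure X} (F : BLFamily G μ) : Set ℝ :=
  {q : ℝ | ∃ hq : 1 ≤ q, H1Trivial (F.rep q hq)}

/-- The fixed-point spectrum for a measure-preserving family. -/
def BLmpFamily.spectrum {G : Type*} [Group G] [TopologicalSpace G]
    {X : Type*} [MeasurableSpace X] {μ : Measure X} (F : BLmpFamily G μ) : Set ℝ :=
  {q : ℝ | ∃ hq : 1 ≤ q, H1Trivial (F.rep q hq)}

/-- Ergodicity of the underlying action `(φ_g)_{g ∈ G}` on `(X,μ)` : every measurable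
a.e.-invariant set is null or conull. -/
def ErgodicFamily {G : Type*} {X : Type*} [MeasurableSpace X] (μ : Measure X)
    (φ : G → X → X) : Prop :=
  ∀ A : Set X, MeasurableSet A → (∀ g : G, μ (symmDiff (φ g ⁻¹' A) A) = 0) →
    μ A = 0 ∨ μ Aᶜ = 0

/-- `w ∈ L_{q'}(X,μ)` (where `q'` is the conjugate exponent of `q`) is an invariant vector
of the contragredient representation `π^*`, expressed through the duality pairing. -/
def IsDualInvariant (μ : Measure X) (q : ℝ) (π : IsomRep G (LpSp μ q)) (w : X → ℂ) : Prop :=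
  MemLp w (ENNReal.ofReal (q / (q - 1))) μ ∧
  ∀ (g : G) (f : LpSp μ q),
    ∫ x, (π.ρ g f : X → ℂ) x * w x ∂μ = ∫ x, (f : X → ℂ) x * w x ∂μ

/-- The complement `L_q(X,μ)'(π)` : the annihilator of the invariant vectors of the
contragredient representation. -/
def LpComplement (μ : Measure X) (q : ℝ) (π : IsomRep G (LpSp μ q)) : Set (LpSp μ q) :=
  {f | ∀ w : X → ℂ, IsDualInvariant μ q π w → ∫ x, (f : X → ℂ) x * w x ∂μ = 0}

/-- The Mazur map `M_{p,q} : f = sgn(f)|f| ↦ sgn(f)|f|^{p/q}`, at the level of functions. -/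
def mazurFn (p q : ℝ) (f : X → ℂ) : X → ℂ :=
  fun x => f x * (((‖f x‖ : ℝ) : ℂ) ^ ((p / q - 1 : ℝ) : ℂ))

/-! ### `L_q(0,1)` -/

/-- Lebesgue measure on `[0,1]`. -/
abbrev mu01 : Measure ℝ := volume.restrict (Set.Icc (0 : ℝ) 1)

/-- `L_q(0,1) = L_q([0,1],λ)`. -/
abbrev Lp01 (q : ℝ) := LpSp mu01 q

/-- Property `(F_{L_q(0,1)})`. -/
def HasFLp01 (G : Type*) [Group G] [TopologicalSpace G] (q : ℝ) : Prop :=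
  ∀ π : IsomRep G (Lp01 q), H1Trivial π

/-- The fixed-point spectrum `𝓕_{L^∞(0,1)}(G)`. -/
def L01Spectrum (G : Type*) [Group G] [TopologicalSpace G] : Set ℝ :=
  {q : ℝ | 1 ≤ q ∧ HasFLp01 G q}

/-- The diameter of a subset of a normed module. -/
def normDiam (S : Set E) : ℝ := sSup {r : ℝ | ∃ x ∈ S, ∃ y ∈ S, ‖x - y‖ = r}

/-! ### extra defs -/
section Extra

variable {G : Type*} [Group G] [TopologicalSpace G]

/-- `w ∈ ℓ_{p'}(X)` is an invariant vector of the contragredient representation `π^*`,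
expressed through the duality pairing `⟨f,w⟩ = ∑ f x · w x`. -/
def lpDualInvariant (p : ℝ) {X : Type*} (π : IsomRep G (lpSeq X p)) (w : X → ℂ) : Prop :=
  Memℓp w (ENNReal.ofReal (p / (p - 1))) ∧
  ∀ (g : G) (f : lpSeq X p),
    ∑' x, (π.ρ g f : ∀ _ : X, ℂ) x * w x = ∑' x, (f : ∀ _ : X, ℂ) x * w x

/-- The complement `ℓ_p'(π)`, the annihilator of the invariant vectors of the
contragredient representation. -/
def lpComplement (p : ℝ) {X : Type*} (π : IsomRep G (lpSeq X p)) : Set (lpSeq X p) :=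
  {f | ∀ w : X → ℂ, lpDualInvariant p π w → ∑' x, (f : ∀ _ : X, ℂ) x * w x = 0}

/-- Property `(T_{ℓ_p})` : for every orthogonal representation `π` of `G` on `ℓ_p`, the
restriction of `π` to `ℓ_p'(π)` (to `ℓ_1/ℓ_1^{π(G)}` when `p = 1`) has no sequence of
almost invariant vectors. -/
def HasTlp (G : Type*) [Group G] [TopologicalSpace G] (p : ℝ) : Prop :=
  ∀ π : IsomRep G (lpSeq ℕ p),
    (1 < p → ¬ HasAIVin π (lpComplement p π)) ∧ (p = 1 → ¬ HasAIVquot π)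

/-- A (BL) orthogonal representation of `G` on `ℓ_p(X)` together with all its Mazur
conjugates : representations on every `ℓ_q(X)` given by the Banach–Lamperti formula
`(π^q(g) f)(x) = h_g(x) · f(σ_g(x))` with the *same* data `(h_g, σ_g)`, where `σ_g` is a
permutation of `X` and `|h_g| ≡ 1`. -/
structure SeqBLFamily (G : Type*) [Group G] [TopologicalSpace G] (X : Type*) where
  h : G → X → ℂ
  σ : G → Equiv.Perm X
  habs : ∀ (g : G) (x : X), ‖h g x‖ = 1
  rep : (q : ℝ) → 1 ≤ q → IsomRep G (lpSeq X q)
  formula : ∀ (q : ℝ) (hq : 1 ≤ q) (g : G) (f : lpSeq X q) (x : X),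
    ((rep q hq).ρ g f : ∀ _ : X, ℂ) x = h g x * (f : ∀ _ : X, ℂ) (σ g x)

/-- The fixed-point spectrum `𝓕_{ℓ^∞}(G,π)` of a (BL) representation on `ℓ_p(X)` and its
Mazur conjugates. -/
def SeqBLFamily.spectrum {G : Type*} [Group G] [TopologicalSpace G] {X : Type*}
    (F : SeqBLFamily G X) : Set ℝ :=
  {q : ℝ | ∃ hq : 1 ≤ q, H1Trivial (F.rep q hq)}

/-- The orbit of a point of `X` under the action associated to a (BL) family. -/
def SeqBLFamily.orbit {G : Type*} [Group G] [TopologicalSpace G] {X : Type*}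
    (F : SeqBLFamily G X) (x : X) : Set X :=
  ⋃ g : G, {F.σ g x}

variable {E : Type*} [AddCommGroup E] [SMul ℂ E] [Norm E]

/-- Continuity of a two-variable map into a normed module. -/
def NormContinuous2 (c : G → G → E) : Prop :=
  ∀ (x : G × G) (ε : ℝ), 0 < ε → ∀ᶠ y in nhds x, ‖c y.1 y.2 - c x.1 x.2‖ < ε

/-- A continuous inhomogeneous `2`-cocycle for `π`. -/
def Is2Cocycle (π : IsomRep G E) (c : G → G → E) : Prop :=
  NormContinuous2 c ∧ ∀ g₁ g₂ g₃ : G,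
    π.ρ g₁ (c g₂ g₃) - c (g₁ * g₂) g₃ + c g₁ (g₂ * g₃) - c g₁ g₂ = 0

/-- An inhomogeneous `2`-coboundary for `π`. -/
def Is2Coboundary (π : IsomRep G E) (c : G → G → E) : Prop :=
  ∃ b : G → E, NormContinuous b ∧
    ∀ g₁ g₂ : G, c g₁ g₂ = π.ρ g₁ (b g₂) - b (g₁ * g₂) + b g₁

/-- `H²(G,π)` is reduced : the space of `2`-coboundaries is closed in the space of
`2`-cocycles for the topology of uniform convergence on finite subsets. -/
def H2Reduced (π : IsomRep G E) : Prop :=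
  ∀ c : G → G → E, Is2Cocycle π c →
    (∀ (S : Finset (G × G)) (ε : ℝ), 0 < ε →
      ∃ c' : G → G → E, Is2Coboundary π c' ∧ ∀ s ∈ S, ‖c s.1 s.2 - c' s.1 s.2‖ < ε) →
    Is2Coboundary π c

/-- `G` is finitely presented. -/
def IsFinitelyPresented (G : Type*) [Group G] : Prop :=
  ∃ (n : ℕ) (rels : Set (FreeGroup (Fin n))), rels.Finite ∧ Nonempty (G ≃* PresentedGroup rels)

end Extra

/-! ### Auxiliary lemmas for the proof of Statement 13 -/

/-- The signed power map `z ↦ z·|z|^{α-1}` (a Mazur-type map, so `|Ψ z| = |z|^α`). -/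
noncomputable def psiC (α : ℝ) (z : ℂ) : ℂ := z * ((‖z‖ ^ (α - 1) : ℝ) : ℂ)

lemma psiC_abs {α : ℝ} (h0 : 0 < α) (z : ℂ) :
    ‖psiC α z‖ = ‖z‖ ^ α := by
  rcases eq_or_ne z 0 with rfl | hz
  · simp [psiC, Real.zero_rpow h0.ne']
  · have hz' : 0 < ‖z‖ := by
      simpa using (norm_pos_iff.mpr hz)
    rw [psiC, norm_mul, Complex.norm_real, Real.norm_eq_abs,
      abs_of_nonneg (Real.rpow_nonneg hz'.le _)]
    calc ‖z‖ * ‖z‖ ^ (α - 1)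
        = ‖z‖ ^ (1:ℝ) * ‖z‖ ^ (α - 1) := by rw [Real.rpow_one]
    _ = ‖z‖ ^ (1 + (α - 1)) := (Real.rpow_add hz' _ _).symm
    _ = ‖z‖ ^ α := by ring_nf

lemma psiC_unimod {α : ℝ} {c : ℂ} (hc : ‖c‖ = 1) (z : ℂ) :
    psiC α (c * z) = c * psiC α z := by
  unfold psiC
  rw [norm_mul, hc, one_mul]; ring

lemma psiC_holder {α : ℝ} (h0 : 0 < α) (h1 : α ≤ 1) (z w : ℂ) :
    ‖psiC α z - psiC α w‖ ≤ 5 * ‖z - w‖ ^ α := by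
  rcases eq_or_ne z w with rfl | hzw
  · simp [Real.zero_rpow h0.ne', Real.rpow_nonneg]
  wlog hba : ‖w‖ ≤ ‖z‖ with H
  · have := H h0 h1 w z (Ne.symm hzw) (le_of_not_ge hba)
    rwa [norm_sub_rev (psiC α w), norm_sub_rev w] at this
  set a := ‖z‖ with ha_def
  set b := ‖w‖ with hb_def
  set d := ‖z - w‖ with hd_def
  have hd : 0 < d := by
    have := sub_ne_zero.2 hzw
    simpa [hd_def] using (norm_pos_iff.mpr this)
  have hb0 : 0 ≤ b := norm_nonneg w
  have ha0 : 0 ≤ a := norm_nonneg z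
  have habd : a ≤ b + d := by
    calc a = ‖w + (z - w)‖ := by ring_nf; exact ha_def
    _ ≤ b + d := norm_add_le w (z - w)
  by_cases hcase : b ≤ 2 * d
  · have h1' : ‖psiC α z - psiC α w‖ ≤ a ^ α + b ^ α := by
      refine (norm_sub_le _ _).trans ?_
      rw [psiC_abs h0, psiC_abs h0]
    have ha3 : a ^ α ≤ 3 * d ^ α := by
      calc a ^ α ≤ (3 * d) ^ α :=
        Real.rpow_le_rpow ha0 (by linarith) h0.le
      _ = 3 ^ α * d ^ α := Real.mul_rpow (by norm_num) hd.le
      _ ≤ 3 * d ^ α := by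
        have : (3:ℝ) ^ α ≤ 3 ^ (1:ℝ) :=
          Real.rpow_le_rpow_of_exponent_le (by norm_num) h1
        rw [Real.rpow_one] at this
        exact mul_le_mul_of_nonneg_right this (Real.rpow_nonneg hd.le _)
    have hb2 : b ^ α ≤ 2 * d ^ α := by
      calc b ^ α ≤ (2 * d) ^ α := Real.rpow_le_rpow hb0 hcase h0.le
      _ = 2 ^ α * d ^ α := Real.mul_rpow (by norm_num) hd.le
      _ ≤ 2 * d ^ α := by
        have : (2:ℝ) ^ α ≤ 2 ^ (1:ℝ) :=
          Real.rpow_le_rpow_of_exponent_le (by norm_num) h1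
        rw [Real.rpow_one] at this
        exact mul_le_mul_of_nonneg_right this (Real.rpow_nonneg hd.le _)
    linarith
  · push_neg at hcase
    have hb : 0 < b := lt_trans (by linarith) hcase
    have ha : 0 < a := lt_of_lt_of_le hb hba
    have key : d * b ^ (α - 1) ≤ d ^ α := by
      have hd1 : d = d ^ α * d ^ (1 - α) := by
        rw [← Real.rpow_add hd]; norm_num
      have h2 : d ^ (1 - α) ≤ b ^ (1 - α) :=
        Real.rpow_le_rpow hd.le (by linarith) (by linarith)
      have h3 : b ^ (1 - α) * b ^ (α - 1) = 1 := by
        rw [← Real.rpow_add hb]; norm_num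
      calc d * b ^ (α - 1) = d ^ α * (d ^ (1 - α) * b ^ (α - 1)) := by
            rw [← mul_assoc, ← hd1]
      _ ≤ d ^ α * (b ^ (1 - α) * b ^ (α - 1)) := by
            refine mul_le_mul_of_nonneg_left ?_ (Real.rpow_nonneg hd.le _)
            exact mul_le_mul_of_nonneg_right h2 (Real.rpow_nonneg hb.le _)
      _ = d ^ α := by rw [h3, mul_one]
    have split : psiC α z - psiC α w
        = (z - w) * ((a ^ (α - 1) : ℝ) : ℂ)
          + w * (((a ^ (α - 1) : ℝ) : ℂ) - ((b ^ (α - 1) : ℝ) : ℂ)) := by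
      unfold psiC; rw [← ha_def, ← hb_def]; ring
    have t1 : ‖(z - w) * ((a ^ (α - 1) : ℝ) : ℂ)‖ ≤ d ^ α := by
      rw [norm_mul, Complex.norm_real, Real.norm_eq_abs, abs_of_nonneg (Real.rpow_nonneg ha0 _), ← hd_def]
      calc d * a ^ (α - 1) ≤ d * b ^ (α - 1) := by
            refine mul_le_mul_of_nonneg_left ?_ hd.le
            exact Real.rpow_le_rpow_of_nonpos hb hba (by linarith)
      _ ≤ d ^ α := key
    have t2 : ‖w * (((a ^ (α - 1) : ℝ) : ℂ) - ((b ^ (α - 1) : ℝ) : ℂ))‖ ≤ d ^ α := by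
      rw [norm_mul, ← Complex.ofReal_sub, Complex.norm_real, Real.norm_eq_abs, ← hb_def]
      have hanti : a ^ (α - 1) ≤ b ^ (α - 1) :=
        Real.rpow_le_rpow_of_nonpos hb hba (by linarith)
      rw [abs_of_nonpos (by linarith), neg_sub]
      set t : ℝ := a / b with ht_def
      have ht1 : 1 ≤ t := (one_le_div hb).2 hba
      have hat : a = b * t := by rw [ht_def]; field_simp [hb.ne']
      have hta : a ^ (α - 1) = b ^ (α - 1) * t ^ (α - 1) := by
        rw [hat, Real.mul_rpow hb.le (by linarith)]
      have htinv : t ^ (-1 : ℝ) ≤ t ^ (α - 1) :=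
        Real.rpow_le_rpow_of_exponent_le ht1 (by linarith)
      rw [Real.rpow_neg_one] at htinv
      have hsub : b ^ (α - 1) - a ^ (α - 1) ≤ b ^ (α - 1) * (t - 1) := by
        rw [hta]
        have h4 : 1 - t ^ (α - 1) ≤ t - 1 := by
          have h5 : 1 - t⁻¹ ≤ t - 1 := by
            have h6 : (1:ℝ) - t⁻¹ = (t - 1) / t := by
              field_simp
            rw [h6]
            exact div_le_self (by linarith) ht1
          linarith
        calc b ^ (α - 1) - b ^ (α - 1) * t ^ (α - 1)
            = b ^ (α - 1) * (1 - t ^ (α - 1)) := by ring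
        _ ≤ b ^ (α - 1) * (t - 1) :=
            mul_le_mul_of_nonneg_left h4 (Real.rpow_nonneg hb.le _)
      have habs : |a - b| ≤ d := by
        rw [ha_def, hb_def, hd_def]
        exact abs_norm_sub_norm_le z w
      have hab_le : a - b ≤ d := (le_abs_self _).trans habs
      calc b * (b ^ (α - 1) - a ^ (α - 1)) ≤ b * (b ^ (α - 1) * (t - 1)) :=
            mul_le_mul_of_nonneg_left hsub hb.le
      _ = b ^ (α - 1) * (a - b) := by
            rw [ht_def]; field_simp
      _ ≤ b ^ (α - 1) * d := mul_le_mul_of_nonneg_left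
            (hab_le) (Real.rpow_nonneg hb.le _)
      _ = d * b ^ (α - 1) := mul_comm _ _
      _ ≤ d ^ α := key
    calc ‖psiC α z - psiC α w‖
        ≤ ‖(z - w) * ((a ^ (α - 1) : ℝ) : ℂ)‖
          + ‖w * (((a ^ (α - 1) : ℝ) : ℂ) - ((b ^ (α - 1) : ℝ) : ℂ))‖ := by
          rw [split]; exact norm_add_le _ _
    _ ≤ d ^ α + d ^ α := add_le_add t1 t2
    _ ≤ 5 * d ^ α := by
        have := Real.rpow_nonneg hd.le α
        linarith

section MainHelpers

variable {X : Type*} [MeasurableSpace X] {μ : Measure X}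

/-- Hölder-type `eLpNorm` bound used to build the `L_r`-cocycle. -/
lemma eLpNorm_psi_bound {w1 w2 : X → ℂ} {r q β : ℝ} (hβ : 0 < β) (hr : 0 ≤ r)
    (hrq : r * β = q)
    (hb : ∀ᵐ x ∂μ, ‖w1 x‖ ≤ 5 * ‖w2 x‖ ^ β) :
    eLpNorm w1 (ENNReal.ofReal r) μ ≤
      ENNReal.ofReal 5 * eLpNorm w2 (ENNReal.ofReal q) μ ^ β := by
  have h1 : eLpNorm w1 (ENNReal.ofReal r) μ ≤
      eLpNorm ((5:ℝ) • fun x => ‖w2 x‖ ^ β) (ENNReal.ofReal r) μ := by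
    apply eLpNorm_mono_ae
    filter_upwards [hb] with x hx
    refine hx.trans ?_
    have hnn : (0:ℝ) ≤ (5:ℝ) * ‖w2 x‖ ^ β := by positivity
    rw [Pi.smul_apply, smul_eq_mul, Real.norm_eq_abs, abs_of_nonneg hnn]
  refine h1.trans ?_
  rw [eLpNorm_const_smul ((5:ℝ)) _ _ _, eLpNorm_norm_rpow _ hβ,
    ← ENNReal.ofReal_mul hr, hrq]
  refine mul_le_mul_left (le_of_eq ?_) _
  rw [← Real.enorm_eq_ofReal (by norm_num : (0:ℝ) ≤ 5)]

/-- Membership of a power of the norm in the appropriate `L_s` space. -/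
lemma memℒp_rpow_norm {u : X → ℂ} {s β : ℝ} (hβ : 0 < β) (hs : 0 ≤ s)
    (hu : MemLp u (ENNReal.ofReal s) μ) :
    MemLp (fun x => ‖u x‖ ^ β) (ENNReal.ofReal (s / β)) μ := by
  constructor
  · exact (hu.1.norm.aemeasurable.pow aemeasurable_const).aestronglyMeasurable
  · rw [eLpNorm_norm_rpow _ hβ, ← ENNReal.ofReal_mul (div_nonneg hs hβ.le), div_mul_cancel₀ _ hβ.ne']
    exact ENNReal.rpow_lt_top_of_nonneg hβ.le hu.2.ne

end MainHelpers


/-- Proposition `prp-mpinterval`. Let `1 ≤ p < q < r < ∞`, `μ` a finite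
measure, and `π^p` a (BL) measure-preserving ergodic representation with Mazur conjugates
`π^q`, `π^r`. If `H¹(G,π^p) = 0` and `H¹(G,π^r) = 0`, then `H¹(G,π^q) = 0`. -/
theorem h1Trivial_intermediate (G : Type*) [Group G] [TopologicalSpace G]
    [IsTopologicalGroup G]
    {X : Type*} [MeasurableSpace X] [StandardBorelSpace X] (μ : Measure X)
    [IsFiniteMeasure μ]
    (p q r : ℝ) (hp : 1 ≤ p) (hpq : p < q) (hqr : q < r)
    (F : BLmpFamily G μ) (herg : ErgodicFamily μ F.φ)
    (h1 : H1Trivial (F.rep p hp))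
    (h2 : H1Trivial (F.rep r ((hp.trans hpq.le).trans hqr.le))) :
    H1Trivial (F.rep q (hp.trans hpq.le)) := by
  classical
  have q1 : 1 ≤ q := hp.trans hpq.le
  have r1 : 1 ≤ r := q1.trans hqr.le
  haveI Fp : Fact (1 ≤ ENNReal.ofReal p) := ⟨ENNReal.one_le_ofReal.2 hp⟩
  haveI Fq : Fact (1 ≤ ENNReal.ofReal q) := ⟨ENNReal.one_le_ofReal.2 q1⟩
  haveI Fr : Fact (1 ≤ ENNReal.ofReal r) := ⟨ENNReal.one_le_ofReal.2 r1⟩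
  intro b hb
  -- trivial case of the zero measure
  by_cases hμ0 : μ = 0
  · subst hμ0
    have hz : ∀ v : LpSp (0 : Measure X) q, v = 0 := by
      intro v
      have hv : ‖v‖ = 0 := by
        rw [MeasureTheory.Lp.norm_def]
        simp
      simpa using norm_eq_zero.mp hv
    exact ⟨0, fun g => by rw [hz (b g), hz (0 - (F.rep q q1).ρ g 0)]⟩
  have hp0 : (0:ℝ) < p := by linarith
  have hq0 : (0:ℝ) < q := by linarith
  have hr0 : (0:ℝ) < r := by linarith
  have hφ : ∀ g : G, MeasurePreserving (F.φ g) μ μ := fun g => (F.isBL q q1 g).2.1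
  have hABS : ∀ g : G, ∀ᵐ x ∂μ, ‖F.h g x‖ = 1 :=
    fun g => (F.isBL q q1 g).2.2.1
  have hcomp : ∀ (g : G) {u v : X → ℂ}, u =ᵐ[μ] v →
      (fun x => u (F.φ g x)) =ᵐ[μ] (fun x => v (F.φ g x)) := by
    intro g u v h
    exact MeasureTheory.ae_eq_comp (hφ g).measurable.aemeasurable
      (by rwa [(hφ g).map_eq] : u =ᵐ[μ.map (F.φ g)] v)
  -- a measurable version of the multiplier `h`
  have hone_mem : MemLp (fun _ : X => (1:ℂ)) (ENNReal.ofReal q) μ := memLp_const 1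
  set one_q : LpSp μ q := hone_mem.toLp _ with hone_q_def
  have hone : ⇑one_q =ᵐ[μ] fun _ => (1:ℂ) := MemLp.coeFn_toLp _
  have hh_ex : ∀ g : G, ∃ hg : X → ℂ, StronglyMeasurable hg ∧ F.h g =ᵐ[μ] hg := by
    intro g
    refine ⟨(Lp.aestronglyMeasurable ((F.rep q q1).ρ g one_q)).mk _,
      (Lp.aestronglyMeasurable _).stronglyMeasurable_mk, ?_⟩
    filter_upwards [(F.isBL q q1 g).2.2.2 one_q, hcomp g hone,
      (Lp.aestronglyMeasurable ((F.rep q q1).ρ g one_q)).ae_eq_mk] with x d1 d2 d3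
    rw [← d3, d1, d2, mul_one]
  choose h' hh'm hh' using hh_ex
  have hBL : ∀ (s : ℝ) (hs : 1 ≤ s) (g : G) (u : LpSp μ s),
      ⇑((F.rep s hs).ρ g u) =ᵐ[μ] fun x => h' g x * (u : X → ℂ) (F.φ g x) := by
    intro s hs g u
    filter_upwards [(F.isBL s hs g).2.2.2 u, hh' g] with x e1 e2
    rw [e1, e2]
  have habs : ∀ g : G, ∀ᵐ x ∂μ, ‖h' g x‖ = 1 := by
    intro g
    filter_upwards [hABS g, hh' g] with x e1 e2
    rw [← e2]; exact e1
  -- Step A : push the cocycle down to `L_p` and apply `H¹(G,π^p) = 0`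
  have hpq' : ENNReal.ofReal p ≤ ENNReal.ofReal q := ENNReal.ofReal_le_ofReal hpq.le
  have memp : ∀ u : LpSp μ q, MemLp (⇑u) (ENNReal.ofReal p) μ :=
    fun u => (Lp.memLp u).mono_exponent hpq'
  set bp : G → LpSp μ p := fun g => (memp (b g)).toLp _ with hbp_def
  have hbp : ∀ g : G, ⇑(bp g) =ᵐ[μ] ⇑(b g) := fun g => MemLp.coeFn_toLp _
  have hbp_coc : ∀ g k : G, bp (g * k) = bp g + (F.rep p hp).ρ g (bp k) := by
    intro g k
    apply Lp.ext
    calc ⇑(bp (g * k)) =ᵐ[μ] ⇑(b (g * k)) := hbp _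
    _ =ᵐ[μ] ⇑(b g + (F.rep q q1).ρ g (b k)) := by rw [hb.2 g k]
    _ =ᵐ[μ] ⇑(b g) + ⇑((F.rep q q1).ρ g (b k)) := Lp.coeFn_add _ _
    _ =ᵐ[μ] fun x => ⇑(bp g) x + h' g x * (⇑(bp k)) (F.φ g x) := by
        filter_upwards [hBL q q1 g (b k), hbp g, hcomp g (hbp k)] with x e1 e2 e3
        simp only [Pi.add_apply]
        rw [e1, e2, e3]
    _ =ᵐ[μ] ⇑(bp g) + ⇑((F.rep p hp).ρ g (bp k)) := by
        filter_upwards [hBL p hp g (bp k)] with x e1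
        simp only [Pi.add_apply]
        rw [e1]
    _ =ᵐ[μ] ⇑(bp g + (F.rep p hp).ρ g (bp k)) := (Lp.coeFn_add _ _).symm
  set Cp : ℝ := ((μ Set.univ) ^ (1 / p - 1 / q)).toReal with hCp_def
  have hCp0 : 0 ≤ Cp := ENNReal.toReal_nonneg
  have hexp0 : 0 ≤ 1 / p - 1 / q := by
    have : 1 / q ≤ 1 / p := one_div_le_one_div_of_le hp0 hpq.le
    linarith
  have hnorm_cmp : ∀ g g₀ : G, ‖bp g - bp g₀‖ ≤ Cp * ‖b g - b g₀‖ := by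
    intro g g₀
    have he : ⇑(bp g - bp g₀) =ᵐ[μ] ⇑(b g - b g₀) := by
      filter_upwards [Lp.coeFn_sub (bp g) (bp g₀), Lp.coeFn_sub (b g) (b g₀),
        hbp g, hbp g₀] with x e1 e2 e3 e4
      rw [e1, e2]
      simp only [Pi.sub_apply]
      rw [e3, e4]
    rw [Lp.norm_def, Lp.norm_def, eLpNorm_congr_ae he]
    have hle := eLpNorm_le_eLpNorm_mul_rpow_measure_univ hpq'
      (Lp.aestronglyMeasurable (b g - b g₀))
    rw [ENNReal.toReal_ofReal hp0.le, ENNReal.toReal_ofReal hq0.le] at hle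
    have hfin : eLpNorm (⇑(b g - b g₀)) (ENNReal.ofReal q) μ
        * (μ Set.univ) ^ (1 / p - 1 / q) ≠ ⊤ :=
      ENNReal.mul_ne_top (Lp.eLpNorm_ne_top _)
        (ENNReal.rpow_lt_top_of_nonneg hexp0 (measure_ne_top μ _)).ne
    calc (eLpNorm (⇑(b g - b g₀)) (ENNReal.ofReal p) μ).toReal
        ≤ (eLpNorm (⇑(b g - b g₀)) (ENNReal.ofReal q) μ
            * (μ Set.univ) ^ (1 / p - 1 / q)).toReal := ENNReal.toReal_mono hfin hle
    _ = Cp * ‖b g - b g₀‖ := by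
        rw [ENNReal.toReal_mul, Lp.norm_def, hCp_def]; ring
  have hbp_cont : NormContinuous bp := by
    intro g₀ ε hε
    have hδ : 0 < ε / (Cp + 1) := by positivity
    filter_upwards [hb.1 g₀ (ε / (Cp + 1)) hδ] with g hg
    have h1 : ‖bp g - bp g₀‖ ≤ Cp * ‖b g - b g₀‖ := hnorm_cmp g g₀
    have h2 : ‖b g - b g₀‖ * (Cp + 1) < ε := by
      rw [← lt_div_iff₀ (by positivity)]
      exact hg
    nlinarith [norm_nonneg (b g - b g₀)]
  obtain ⟨fp, hfp⟩ := h1 bp ⟨hbp_cont, hbp_coc⟩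
  -- a measurable representative
  set f' : X → ℂ := (Lp.aestronglyMeasurable fp).mk ⇑fp with hf'_def
  have hf'm : StronglyMeasurable f' := (Lp.aestronglyMeasurable fp).stronglyMeasurable_mk
  have hf'e : ⇑fp =ᵐ[μ] f' := (Lp.aestronglyMeasurable fp).ae_eq_mk
  have hBform : ∀ g : G, ⇑(b g) =ᵐ[μ] fun x => f' x - h' g x * f' (F.φ g x) := by
    intro g
    calc ⇑(b g) =ᵐ[μ] ⇑(bp g) := (hbp g).symm
    _ =ᵐ[μ] ⇑(fp - (F.rep p hp).ρ g fp) := by rw [hfp g]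
    _ =ᵐ[μ] ⇑fp - ⇑((F.rep p hp).ρ g fp) := Lp.coeFn_sub _ _
    _ =ᵐ[μ] fun x => f' x - h' g x * f' (F.φ g x) := by
        filter_upwards [hf'e, hBL p hp g fp, hcomp g hf'e] with x e1 e2 e3
        simp only [Pi.sub_apply]
        rw [e1, e2, e3]
  -- Step B : build an `L_r` cocycle from the Mazur-type image of `f'`
  set α : ℝ := q / r with hα_def
  have hα0 : 0 < α := by positivity
  have hα1 : α ≤ 1 := by
    rw [hα_def, div_le_one hr0]; linarith
  have hrα : r * α = q := by
    rw [hα_def]; field_simp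
  have mψ : Measurable fun x => psiC α (f' x) := by
    have habs_m : Measurable fun x => ‖f' x‖ := by
      exact hf'm.measurable.norm
    exact hf'm.measurable.mul
      (Complex.measurable_ofReal.comp (habs_m.pow measurable_const))
  set cf : G → X → ℂ := fun g x => psiC α (f' x) - h' g x * psiC α (f' (F.φ g x))
    with hcf_def
  have hcfm : ∀ g : G, Measurable (cf g) := by
    intro g
    exact mψ.sub ((hh'm g).measurable.mul (mψ.comp (hφ g).measurable))
  have hbound : ∀ g : G, ∀ᵐ x ∂μ,
      ‖cf g x‖ ≤ 5 * ‖(⇑(b g)) x‖ ^ α := by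
    intro g
    filter_upwards [habs g, hBform g] with x e1 e2
    have hkey : cf g x = psiC α (f' x) - psiC α (h' g x * f' (F.φ g x)) := by
      simp only [hcf_def]
      rw [psiC_unimod e1]
    rw [hkey, e2]
    exact psiC_holder hα0 hα1 _ _
  have memc : ∀ g : G, MemLp (cf g) (ENNReal.ofReal r) μ := by
    intro g
    refine ⟨(hcfm g).aestronglyMeasurable, ?_⟩
    refine lt_of_le_of_lt (eLpNorm_psi_bound hα0 hr0.le hrα (hbound g)) ?_
    exact ENNReal.mul_lt_top ENNReal.ofReal_lt_top
      (ENNReal.rpow_lt_top_of_nonneg hα0.le (Lp.eLpNorm_ne_top _))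
  set c : G → LpSp μ r := fun g => (memc g).toLp _ with hc_def
  have hc : ∀ g : G, ⇑(c g) =ᵐ[μ] cf g := fun g => MemLp.coeFn_toLp _
  -- the `(h,φ)`-cocycle relations
  have hstar : ∀ g k : G, ∀ u : LpSp μ q,
      (fun x => h' (g * k) x * (u : X → ℂ) (F.φ (g * k) x)) =ᵐ[μ]
      (fun x => h' g x * (h' k (F.φ g x) * (u : X → ℂ) (F.φ k (F.φ g x)))) := by
    intro g k u
    calc (fun x => h' (g * k) x * (u : X → ℂ) (F.φ (g * k) x))
        =ᵐ[μ] ⇑((F.rep q q1).ρ (g * k) u) := (hBL q q1 (g * k) u).symm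
    _ = ⇑((F.rep q q1).ρ g ((F.rep q q1).ρ k u)) := by rw [(F.rep q q1).map_mul' g k u]
    _ =ᵐ[μ] fun x => h' g x * ⇑((F.rep q q1).ρ k u) (F.φ g x) := hBL q q1 g _
    _ =ᵐ[μ] fun x => h' g x * (h' k (F.φ g x) * (u : X → ℂ) (F.φ k (F.φ g x))) := by
        filter_upwards [hcomp g (hBL q q1 k u)] with x e1
        rw [e1]
  have hcoch : ∀ g k : G, ∀ᵐ x ∂μ, h' (g * k) x = h' g x * h' k (F.φ g x) := by
    intro g k
    filter_upwards [hstar g k one_q, hcomp (g * k) hone,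
      hcomp g (hcomp k hone)] with x e1 e2 e3
    have e1' : h' (g * k) x * (⇑one_q) (F.φ (g * k) x)
        = h' g x * (h' k (F.φ g x) * (⇑one_q) (F.φ k (F.φ g x))) := e1
    have e2' : (⇑one_q) (F.φ (g * k) x) = 1 := e2
    have e3' : (⇑one_q) (F.φ k (F.φ g x)) = 1 := e3
    rw [e2', e3', mul_one, mul_one] at e1'
    exact e1'
  have hφcoc : ∀ g k : G, ∀ᵐ x ∂μ, F.φ (g * k) x = F.φ k (F.φ g x) := by
    intro g k
    have hptu : ∀ u : LpSp μ q, ∀ᵐ x ∂μ,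
        (u : X → ℂ) (F.φ (g * k) x) = (u : X → ℂ) (F.φ k (F.φ g x)) := by
      intro u
      filter_upwards [hstar g k u, hcoch g k, habs (g * k)] with x e1' e2 e3
      have e1 : h' (g * k) x * (u : X → ℂ) (F.φ (g * k) x)
          = h' g x * (h' k (F.φ g x) * (u : X → ℂ) (F.φ k (F.φ g x))) := e1'
      rw [e2] at e1
      have hne : h' g x * h' k (F.φ g x) ≠ 0 := by
        rw [← e2]
        intro h0
        rw [h0] at e3
        simpa using e3
      rw [mul_assoc] at e1
      exact mul_left_cancel₀ (right_ne_zero_of_mul hne)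
        (mul_left_cancel₀ (left_ne_zero_of_mul hne) e1)
    have hind : ∀ A : Set X, MeasurableSet A → ∀ᵐ x ∂μ,
        A.indicator (fun _ => (1:ℂ)) (F.φ (g * k) x)
          = A.indicator (fun _ => (1:ℂ)) (F.φ k (F.φ g x)) := by
      intro A hA
      set u : LpSp μ q := indicatorConstLp (ENNReal.ofReal q) hA (measure_ne_top μ A) (1:ℂ)
        with hu_def
      have hue : ⇑u =ᵐ[μ] A.indicator fun _ => (1:ℂ) := indicatorConstLp_coeFn
      filter_upwards [hptu u, hcomp (g * k) hue, hcomp g (hcomp k hue)] with x e1 e2 e3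
      have e2' : (u : X → ℂ) (F.φ (g * k) x)
          = A.indicator (fun _ => (1:ℂ)) (F.φ (g * k) x) := e2
      have e3' : (u : X → ℂ) (F.φ k (F.φ g x))
          = A.indicator (fun _ => (1:ℂ)) (F.φ k (F.φ g x)) := e3
      rw [← e2', ← e3']
      exact e1
    letI := upgradeStandardBorel X
    obtain ⟨S, hSc, hSm, hSsep⟩ :=
      (inferInstance : HasCountableSeparatingOn X MeasurableSet Set.univ).1
    have hall : ∀ᵐ x ∂μ, ∀ A ∈ S, (F.φ (g * k) x ∈ A ↔ F.φ k (F.φ g x) ∈ A) := by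
      rw [MeasureTheory.ae_ball_iff hSc]
      intro A hA
      filter_upwards [hind A (hSm A hA)] with x e
      constructor
      · intro hx
        by_contra hx'
        rw [Set.indicator_of_mem hx, Set.indicator_of_notMem hx'] at e
        simpa using e
      · intro hx
        by_contra hx'
        rw [Set.indicator_of_notMem hx', Set.indicator_of_mem hx] at e
        simpa using e
    filter_upwards [hall] with x e
    exact hSsep _ (Set.mem_univ _) _ (Set.mem_univ _) e
  have hc_coc : ∀ g k : G, c (g * k) = c g + (F.rep r r1).ρ g (c k) := by
    intro g k
    apply Lp.ext
    calc ⇑(c (g * k)) =ᵐ[μ] cf (g * k) := hc _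
    _ =ᵐ[μ] fun x => cf g x + h' g x * cf k (F.φ g x) := by
        filter_upwards [hcoch g k, hφcoc g k] with x e1 e2
        simp only [hcf_def]
        rw [e1, e2]
        ring
    _ =ᵐ[μ] ⇑(c g) + ⇑((F.rep r r1).ρ g (c k)) := by
        filter_upwards [hc g, hBL r r1 g (c k), hcomp g (hc k)] with x e1 e2 e3
        have e3' : (⇑(c k)) (F.φ g x) = cf k (F.φ g x) := e3
        simp only [Pi.add_apply]
        rw [e1, e2, e3']
    _ =ᵐ[μ] ⇑(c g + (F.rep r r1).ρ g (c k)) := (Lp.coeFn_add _ _).symm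
  have hcnorm : ∀ g g₀ : G, ‖c g - c g₀‖ ≤ 5 * ‖b g - b g₀‖ ^ α := by
    intro g g₀
    have he : ⇑(c g - c g₀) =ᵐ[μ] fun x => cf g x - cf g₀ x := by
      filter_upwards [Lp.coeFn_sub (c g) (c g₀), hc g, hc g₀] with x e1 e2 e3
      rw [e1]
      simp only [Pi.sub_apply]
      rw [e2, e3]
    have hbnd : ∀ᵐ x ∂μ, ‖(fun x => cf g x - cf g₀ x) x‖
        ≤ 5 * ‖(⇑(b g - b g₀)) x‖ ^ α := by
      filter_upwards [habs g, habs g₀, hBform g, hBform g₀,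
        Lp.coeFn_sub (b g) (b g₀)] with x e1 e2 e3 e4 e5
      have hkey : cf g x - cf g₀ x
          = psiC α (h' g₀ x * f' (F.φ g₀ x)) - psiC α (h' g x * f' (F.φ g x)) := by
        simp only [hcf_def]
        rw [psiC_unimod e1, psiC_unimod e2]
        ring
      have harg : (⇑(b g - b g₀)) x
          = (h' g₀ x * f' (F.φ g₀ x)) - (h' g x * f' (F.φ g x)) := by
        rw [e5]
        simp only [Pi.sub_apply]
        rw [e3, e4]
        ring
      show ‖cf g x - cf g₀ x‖
        ≤ 5 * ‖(⇑(b g - b g₀)) x‖ ^ α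
      rw [hkey, harg]
      exact psiC_holder hα0 hα1 _ _
    rw [Lp.norm_def, Lp.norm_def, eLpNorm_congr_ae he]
    have hle := eLpNorm_psi_bound (μ := μ) hα0 hr0.le hrα hbnd
    have hfin : ENNReal.ofReal 5 * eLpNorm (⇑(b g - b g₀)) (ENNReal.ofReal q) μ ^ α ≠ ⊤ :=
      ENNReal.mul_ne_top ENNReal.ofReal_ne_top
        (ENNReal.rpow_lt_top_of_nonneg hα0.le (Lp.eLpNorm_ne_top _)).ne
    refine le_trans (ENNReal.toReal_mono hfin hle) ?_
    rw [ENNReal.toReal_mul, ENNReal.toReal_ofReal (by norm_num : (0:ℝ) ≤ 5),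
      ← ENNReal.toReal_rpow]
  have hc_cont : NormContinuous c := by
    intro g₀ ε hε
    have hmin : 0 < min (ε / 10) 1 := lt_min (by linarith) one_pos
    have hδ : 0 < (min (ε / 10) 1) ^ (r / q) := Real.rpow_pos_of_pos hmin _
    filter_upwards [hb.1 g₀ ((min (ε / 10) 1) ^ (r / q)) hδ] with g hg
    have h1 : ‖c g - c g₀‖ ≤ 5 * ‖b g - b g₀‖ ^ α := hcnorm g g₀
    have h2 : ‖b g - b g₀‖ ^ α ≤ ((min (ε / 10) 1) ^ (r / q)) ^ α :=
      Real.rpow_le_rpow (norm_nonneg _) hg.le hα0.le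
    have h3 : ((min (ε / 10) 1) ^ (r / q)) ^ α = min (ε / 10) 1 := by
      rw [← Real.rpow_mul hmin.le]
      have : r / q * α = 1 := by
        rw [hα_def]; field_simp
      rw [this, Real.rpow_one]
    have h4 : min (ε / 10) 1 ≤ ε / 10 := min_le_left _ _
    rw [h3] at h2
    calc ‖c g - c g₀‖ ≤ 5 * ‖b g - b g₀‖ ^ α := h1
    _ ≤ 5 * (ε / 10) := by linarith
    _ < ε := by linarith
  -- Step C : apply `H¹(G,π^r) = 0` and use ergodicity
  obtain ⟨V, hV⟩ := h2 c ⟨hc_cont, hc_coc⟩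
  set V' : X → ℂ := (Lp.aestronglyMeasurable V).mk ⇑V with hV'_def
  have hV'm : StronglyMeasurable V' := (Lp.aestronglyMeasurable V).stronglyMeasurable_mk
  have hV'e : ⇑V =ᵐ[μ] V' := (Lp.aestronglyMeasurable V).ae_eq_mk
  set W : X → ℂ := fun x => psiC α (f' x) - V' x with hW_def
  have hWm : Measurable W := mψ.sub hV'm.measurable
  have hWinv : ∀ g : G, ∀ᵐ x ∂μ, W x = h' g x * W (F.φ g x) := by
    intro g
    have e0 : ⇑(c g) =ᵐ[μ] ⇑V - ⇑((F.rep r r1).ρ g V) := by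
      rw [hV g]; exact Lp.coeFn_sub _ _
    filter_upwards [hc g, e0, hBL r r1 g V, hcomp g hV'e, hV'e] with x e1 e2 e3 e4 e5
    simp only [Pi.sub_apply] at e2
    have e4' : (⇑V) (F.φ g x) = V' (F.φ g x) := e4
    have ec : cf g x = V' x - h' g x * V' (F.φ g x) := by
      rw [← e1, e2, e3, e4', e5]
    simp only [hcf_def] at ec
    simp only [hW_def]
    linear_combination ec
  have hWabs : ∀ g : G, ∀ᵐ x ∂μ, ‖W (F.φ g x)‖ = ‖W x‖ := by
    intro g
    filter_upwards [hWinv g, habs g] with x e1 e2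
    rw [e1, norm_mul, e2, one_mul]
  have herg' : ∀ n : ℕ, μ {x | (n:ℝ) < ‖W x‖} = 0
      ∨ μ {x | (n:ℝ) < ‖W x‖}ᶜ = 0 := by
    intro n
    have habsm : Measurable fun x => ‖W x‖ := by
      exact hWm.norm
    refine herg _ (measurableSet_lt measurable_const habsm) ?_
    intro g
    have hnull : μ {x | ¬ ‖W (F.φ g x)‖ = ‖W x‖} = 0 := by
      have := hWabs g
      rwa [MeasureTheory.ae_iff] at this
    refine measure_mono_null ?_ hnull
    intro x hx
    simp only [Set.mem_symmDiff, Set.mem_preimage, Set.mem_setOf_eq] at hx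
    simp only [Set.mem_setOf_eq]
    rcases hx with ⟨hx1, hx2⟩ | ⟨hx1, hx2⟩
    · intro he; rw [he] at hx1; exact hx2 hx1
    · intro he; rw [he] at hx2; exact hx2 hx1
  have hbdd : ∃ n : ℕ, μ {x | (n:ℝ) < ‖W x‖} = 0 := by
    by_contra hcon
    push_neg at hcon
    have hall : ∀ n : ℕ, μ {x | (n:ℝ) < ‖W x‖}ᶜ = 0 :=
      fun n => (herg' n).resolve_left (hcon n)
    have hu0 : μ (⋃ n : ℕ, {x | (n:ℝ) < ‖W x‖}ᶜ) = 0 :=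
      measure_iUnion_null hall
    have huniv : (⋃ n : ℕ, {x | (n:ℝ) < ‖W x‖}ᶜ) = Set.univ := by
      ext x
      simp only [Set.mem_iUnion, Set.mem_compl_iff, Set.mem_setOf_eq, Set.mem_univ,
        iff_true, not_lt]
      exact exists_nat_ge _
    rw [huniv] at hu0
    exact hμ0 (Measure.measure_univ_eq_zero.mp hu0)
  obtain ⟨n, hn⟩ := hbdd
  have hWbd : ∀ᵐ x ∂μ, ‖W x‖ ≤ (n:ℝ) := by
    rw [MeasureTheory.ae_iff]
    convert hn using 2
    ext x
    simp [not_le]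
  -- Step D : conclude that `f' ∈ L_q`
  have hmemψ : MemLp (fun x => psiC α (f' x)) (ENNReal.ofReal r) μ := by
    have hVr : MemLp V' (ENNReal.ofReal r) μ := (Lp.memLp V).ae_eq hV'e
    have hgmem : MemLp (fun x => ‖V' x‖ + (n:ℝ)) (ENNReal.ofReal r) μ :=
      hVr.norm.add (memLp_const _)
    refine MemLp.of_le hgmem mψ.aestronglyMeasurable ?_
    filter_upwards [hWbd] with x hx
    have h1 : ‖psiC α (f' x)‖ ≤ ‖V' x‖ + (n:ℝ) := by
      have : psiC α (f' x) = W x + V' x := by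
        simp only [hW_def]; ring
      rw [this]
      refine (norm_add_le _ _).trans ?_
      linarith
    rw [Real.norm_eq_abs,
      abs_of_nonneg (by positivity : (0:ℝ) ≤ ‖V' x‖ + (n:ℝ))]
    exact h1
  have hmemf : MemLp f' (ENNReal.ofReal q) μ := by
    have h1 := memℒp_rpow_norm (μ := μ) (u := fun x => psiC α (f' x))
      (by positivity : (0:ℝ) < 1 / α) hr0.le hmemψ
    have hrq2 : r / (1 / α) = q := by
      rw [hα_def]; field_simp
    rw [hrq2] at h1
    refine ⟨hf'm.aestronglyMeasurable, ?_⟩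
    have heq : (fun x => ‖(fun y => psiC α (f' y)) x‖ ^ (1 / α)) = fun x => ‖f' x‖ := by
      funext x
      show ‖psiC α (f' x)‖ ^ (1 / α) = ‖f' x‖
      rw [psiC_abs hα0,
        ← Real.rpow_mul (norm_nonneg _), mul_one_div, div_self hα0.ne',
        Real.rpow_one]
    rw [← eLpNorm_norm, ← heq]
    exact h1.2
  refine ⟨hmemf.toLp f', fun g => ?_⟩
  apply Lp.ext
  have hf'e2 : ⇑(hmemf.toLp f') =ᵐ[μ] f' := MemLp.coeFn_toLp _
  calc ⇑(b g) =ᵐ[μ] fun x => f' x - h' g x * f' (F.φ g x) := hBform g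
  _ =ᵐ[μ] ⇑(hmemf.toLp f') - ⇑((F.rep q q1).ρ g (hmemf.toLp f')) := by
      filter_upwards [hf'e2, hBL q q1 g (hmemf.toLp f'), hcomp g hf'e2] with x e1 e2 e3
      simp only [Pi.sub_apply]
      rw [e1, e2, e3]
  _ =ᵐ[μ] ⇑(hmemf.toLp f' - (F.rep q q1).ρ g (hmemf.toLp f')) := (Lp.coeFn_sub _ _).symm

end
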